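/- arXiv:2001.01175 — 3 statements merged into one kernel-verified Lean document; each statement's English description precedes it below -/
import Mathlib

section
/- For all t ≥ 0 and positive integers k, the variance of the volume of type-≥k sites satisfies Var(Y_k(t)) ≤ γ_d (2αt)^d E[Y_k(t)]. -/
open MeasureTheory ProbabilityTheory Real Set Filter

noncomputable section

/-- volume of the unit ball in `ℝ^d`. -/
def unitBallVol (d : ℕ) : ℝ := (volume (Metric.ball (0 : EuclideanSpace ℝ (Fin d)) 1)).toReal

/-- coordinatewise torus distance on the torus `[0,L]^d`. -/
def torusDist (d : ℕ) (L : ℝ) (x y : Fin d → ℝ) : ℝ :=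
  Real.sqrt (∑ i, (min |x i - y i| (L - |x i - y i|)) ^ 2)

/-- the torus, viewed as a box of side length `L`. -/
def box (d : ℕ) (L : ℝ) : Set (Fin d → ℝ) := Set.univ.pi fun _ => Set.Ico 0 L

open scoped ENNReal

lemma quadric_measurable (d : ℕ) (x : Fin d → ℝ) (r : ℝ) :
    MeasurableSet {z : Fin d → ℝ | ∑ i, (z i - x i)^2 ≤ r^2} :=
  measurableSet_le (by fun_prop) measurable_const

-- volume of the quadric set in pi space
lemma vol_quadric (d : ℕ) (x : Fin d → ℝ) {r : ℝ} (hr : 0 ≤ r) :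
    volume {z : Fin d → ℝ | ∑ i, (z i - x i)^2 ≤ r^2}
      = ENNReal.ofReal (r ^ d) * volume (Metric.ball (0 : EuclideanSpace ℝ (Fin d)) 1) := by
  have hmp := EuclideanSpace.volume_preserving_symm_measurableEquiv_toLp (Fin d)
  set e := (MeasurableEquiv.toLp 2 (Fin d → ℝ)).symm
  have hE : MeasurableSet {z : Fin d → ℝ | ∑ i, (z i - x i)^2 ≤ r^2} :=
    quadric_measurable d x r
  have hpre : e ⁻¹' {z : Fin d → ℝ | ∑ i, (z i - x i)^2 ≤ r^2}
      = Metric.closedBall (e.symm x) r := by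
    ext z
    simp only [Set.mem_preimage, Set.mem_setOf_eq, Metric.mem_closedBall]
    rw [EuclideanSpace.dist_eq, Real.sqrt_le_left hr]
    have h1 : ∀ i, dist (z i) ((e.symm x) i) = |z i - x i| := fun i => rfl
    have h2 : ∀ i, dist (z i) ((e.symm x) i) ^ 2 = (z i - x i) ^ 2 := by
      intro i; rw [h1 i, sq_abs]
    rw [Finset.sum_congr rfl fun i _ => h2 i]
    rfl
  rw [← hmp.measure_preimage hE.nullMeasurableSet, hpre,
    Measure.addHaar_closedBall _ _ hr, finrank_euclideanSpace_fin]
open Finset in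
lemma vol_torus_ball (d : ℕ) {L r : ℝ} (hL : 0 < L) (hr : 0 ≤ r) (x : Fin d → ℝ)
    (hx : x ∈ box d L) :
    volume {y | y ∈ box d L ∧ torusDist d L x y ≤ r}
      ≤ ENNReal.ofReal (r ^ d) * volume (Metric.ball (0 : EuclideanSpace ℝ (Fin d)) 1) := by
  classical
  set Q : Set (Fin d → ℝ) := {z | ∑ i, (z i - x i)^2 ≤ r^2} with hQdef
  have hQmeas : MeasurableSet Q := quadric_measurable d x r
  set K : Finset (Fin d → ℝ) := Fintype.piFinset (fun _ : Fin d => ({-1,0,1} : Finset ℝ)) with hK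
  set B : (Fin d → ℝ) → Set (Fin d → ℝ) :=
    fun k => ((fun y => y - L • k) ⁻¹' Q) ∩ box d L with hB
  set C : (Fin d → ℝ) → Set (Fin d → ℝ) :=
    fun k => Q ∩ ((fun u => u + L • k) ⁻¹' box d L) with hC
  have hboxmeas : MeasurableSet (box d L) :=
    MeasurableSet.univ_pi fun _ => measurableSet_Ico
  -- covering
  have hcover : {y | y ∈ box d L ∧ torusDist d L x y ≤ r} ⊆ ⋃ k ∈ K, B k := by
    rintro y ⟨hy, hdist⟩
    set k : Fin d → ℝ := fun i =>
      if |x i - y i| ≤ L - |x i - y i| then 0 else (if x i ≤ y i then 1 else -1) with hk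
    have hkK : k ∈ K := by
      rw [hK, Fintype.mem_piFinset]
      intro i
      simp only [hk, Finset.mem_insert, Finset.mem_singleton]
      split_ifs <;> tauto
    have hcoord : ∀ i, (y i - L * k i - x i)^2
        = (min |x i - y i| (L - |x i - y i|))^2 := by
      intro i
      have hxi := hx i (Set.mem_univ i)
      have hyi := hy i (Set.mem_univ i)
      simp only [Set.mem_Ico] at hxi hyi
      by_cases h1 : |x i - y i| ≤ L - |x i - y i|
      · rw [min_eq_left h1]
        simp only [hk, if_pos h1]
        rw [sq_abs]; ring
      · rw [min_eq_right (le_of_not_ge h1)]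
        simp only [hk, if_neg h1]
        by_cases h2 : x i ≤ y i
        · rw [if_pos h2]
          rw [abs_of_nonpos (by linarith : x i - y i ≤ 0)]
          ring
        · rw [if_neg h2]
          rw [abs_of_nonneg (by linarith : (0:ℝ) ≤ x i - y i)]
          ring
    have hsum : ∑ i, (y i - L * k i - x i)^2 ≤ r^2 := by
      have : ∑ i, (y i - L * k i - x i)^2
          = ∑ i, (min |x i - y i| (L - |x i - y i|))^2 :=
        Finset.sum_congr rfl fun i _ => hcoord i
      rw [this]
      exact (Real.sqrt_le_left hr).mp hdist
    refine Set.mem_biUnion hkK ?_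
    refine ⟨?_, hy⟩
    show (fun i => y i - (L • k) i) ∈ Q
    simp only [hQdef, Set.mem_setOf_eq, Pi.smul_apply, smul_eq_mul]
    exact hsum
  -- disjointness of the C k
  have hdisj : (K : Set (Fin d → ℝ)).PairwiseDisjoint C := by
    intro k hkK k' hk'K hne
    rw [Function.onFun, Set.disjoint_left]
    rintro u ⟨_, hu1⟩ ⟨_, hu2⟩
    apply hne
    funext i
    have h1 := hu1 i (Set.mem_univ i)
    have h2 := hu2 i (Set.mem_univ i)
    simp only [Pi.add_apply, Pi.smul_apply, smul_eq_mul, Set.mem_Ico] at h1 h2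
    have hk1 : k i = -1 ∨ k i = 0 ∨ k i = 1 := by
      have := Fintype.mem_piFinset.mp hkK i
      simpa using this
    have hk2 : k' i = -1 ∨ k' i = 0 ∨ k' i = 1 := by
      have := Fintype.mem_piFinset.mp hk'K i
      simpa using this
    rcases hk1 with h | h | h <;> rcases hk2 with h' | h' | h' <;>
      rw [h] at h1 ⊢ <;> rw [h'] at h2 ⊢ <;>
      first | rfl | (exfalso; nlinarith [h1.1, h1.2, h2.1, h2.2])
  have hCmeas : ∀ k, MeasurableSet (C k) := by
    intro k
    exact hQmeas.inter ((measurable_add_const (L • k)) hboxmeas)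
  -- translation invariance: volume (B k) = volume (C k)
  have htrans : ∀ k : Fin d → ℝ, volume (B k) = volume (C k) := by
    intro k
    have : (fun u : Fin d → ℝ => u + L • k) ⁻¹' (B k) = C k := by
      ext u
      simp only [hB, hC, Set.mem_preimage, Set.mem_inter_iff, add_sub_cancel_right]
    rw [← this, measure_preimage_add_right]
  calc volume {y | y ∈ box d L ∧ torusDist d L x y ≤ r}
      ≤ volume (⋃ k ∈ K, B k) := measure_mono hcover
    _ ≤ ∑ k ∈ K, volume (B k) := measure_biUnion_finset_le K B
    _ = ∑ k ∈ K, volume (C k) := Finset.sum_congr rfl fun k _ => htrans k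
    _ = volume (⋃ k ∈ K, C k) := (measure_biUnion_finset hdisj fun k _ => hCmeas k).symm
    _ ≤ volume Q := measure_mono (Set.iUnion₂_subset fun k _ => Set.inter_subset_left)
    _ = ENNReal.ofReal (r ^ d) * volume (Metric.ball (0 : EuclideanSpace ℝ (Fin d)) 1) :=
        vol_quadric d x hr

set_option maxHeartbeats 2000000 in
/-- Variance bound for the volume `Y_k(t)` of type-≥k sites: if sites at torus distance
greater than `2αt` are occupied independently, then
`Var(Y_k(t)) ≤ γ_d (2αt)^d E[Y_k(t)]`. -/
theorem variance_volume_bound {Ω : Type*} [MeasurableSpace Ω]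
    (P : Measure Ω) [IsProbabilityMeasure P]
    (d : ℕ) (hd : 0 < d) (L α t : ℝ) (hL : 0 < L) (hα : 0 < α) (ht : 0 ≤ t)
    (ψ : Ω → Set (Fin d → ℝ))
    (hsub : ∀ ω, ψ ω ⊆ box d L)
    (hmeas : MeasurableSet {p : (Fin d → ℝ) × Ω | p.1 ∈ ψ p.2})
    (hindep : ∀ x y, x ∈ box d L → y ∈ box d L → torusDist d L x y > 2 * α * t →
      (P {ω | x ∈ ψ ω ∧ y ∈ ψ ω}).toReal
        = (P {ω | x ∈ ψ ω}).toReal * (P {ω | y ∈ ψ ω}).toReal)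
    (Y : Ω → ℝ) (hY : ∀ ω, Y ω = (volume (ψ ω)).toReal) :
    variance Y P ≤ unitBallVol d * (2 * α * t) ^ d * ∫ ω, Y ω ∂P := by
  classical
  set S : Set ((Fin d → ℝ) × Ω) := {p | p.1 ∈ ψ p.2} with hS
  set c : ℝ := 2 * α * t with hc
  have hc0 : (0:ℝ) ≤ c := by positivity
  have hboxmeas : MeasurableSet (box d L) :=
    MeasurableSet.univ_pi fun _ => measurableSet_Ico
  set ν : Measure (Fin d → ℝ) := volume.restrict (box d L) with hν
  have hboxfin : volume (box d L) < ⊤ := by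
    rw [box, volume_pi_pi]
    simp only [Real.volume_Ico, sub_zero, Finset.prod_const, Finset.card_univ, Fintype.card_fin]
    exact ENNReal.pow_lt_top ENNReal.ofReal_lt_top
  haveI : IsFiniteMeasure ν := ⟨by rwa [hν, Measure.restrict_apply_univ]⟩
  -- ν of ψ ω
  have hψν : ∀ ω, volume (ψ ω) = ν (ψ ω) := by
    intro ω
    rw [hν, Measure.restrict_apply' hboxmeas, Set.inter_eq_self_of_subset_left (hsub ω)]
  -- occupancy probability
  set q : (Fin d → ℝ) → ℝ≥0∞ := fun x => P {ω | x ∈ ψ ω} with hq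
  have hqmeas : Measurable q := measurable_measure_prodMk_left hmeas
  have hq1 : ∀ x, q x ≤ 1 := fun x => prob_le_one
  set I : ℝ≥0∞ := ∫⁻ x, q x ∂ν with hI
  have hIfin : I ≠ ⊤ := by
    have h1 : I ≤ ν Set.univ := by
      calc I ≤ ∫⁻ _x, 1 ∂ν := lintegral_mono fun x => hq1 x
        _ = ν Set.univ := lintegral_one
    exact (lt_of_le_of_lt h1 (measure_lt_top ν _)).ne
  -- Step A : E[vol ψ] = I
  have hYmeasE : Measurable fun ω => ν (ψ ω) := measurable_measure_prodMk_right (μ := ν) hmeas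
  have hstepA : ∫⁻ ω, ν (ψ ω) ∂P = I := by
    have h1 : (ν.prod P) S = ∫⁻ x, q x ∂ν := Measure.prod_apply hmeas
    have h2 : (ν.prod P) S = ∫⁻ ω, ν (ψ ω) ∂P := Measure.prod_apply_symm hmeas
    rw [hI, ← h1]; exact h2.symm
  -- Step B : E[(vol ψ)²] as a double integral
  set T : Set (((Fin d → ℝ) × (Fin d → ℝ)) × Ω) :=
    {z | (z.1.1, z.2) ∈ S ∧ (z.1.2, z.2) ∈ S} with hT
  have hTmeas : MeasurableSet T := by
    apply MeasurableSet.inter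
    · exact hmeas.preimage ((measurable_fst.comp measurable_fst).prodMk measurable_snd)
    · exact hmeas.preimage ((measurable_snd.comp measurable_fst).prodMk measurable_snd)
  set p : (Fin d → ℝ) × (Fin d → ℝ) → ℝ≥0∞ :=
    fun z => P {ω | z.1 ∈ ψ ω ∧ z.2 ∈ ψ ω} with hp
  have hpmeas : Measurable p := measurable_measure_prodMk_left hTmeas
  set J : ℝ≥0∞ := ∫⁻ ω, ν (ψ ω) * ν (ψ ω) ∂P with hJ
  have hstepB : J = ∫⁻ x, ∫⁻ y, p (x, y) ∂ν ∂ν := by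
    have h1 : ((ν.prod ν).prod P) T = ∫⁻ z, p z ∂(ν.prod ν) :=
      Measure.prod_apply hTmeas
    have h2 : ((ν.prod ν).prod P) T = ∫⁻ ω, (ν.prod ν) ((fun z => (z, ω)) ⁻¹' T) ∂P :=
      Measure.prod_apply_symm hTmeas
    have h3 : ∀ ω, (ν.prod ν) ((fun z => (z, ω)) ⁻¹' T) = ν (ψ ω) * ν (ψ ω) := by
      intro ω
      have : ((fun z => (z, ω)) ⁻¹' T) = (ψ ω) ×ˢ (ψ ω) := by
        ext z
        simp [hT, hS, Set.mem_prod]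
      rw [this, Measure.prod_prod]
    have h4 : ∫⁻ z, p z ∂(ν.prod ν) = ∫⁻ x, ∫⁻ y, p (x, y) ∂ν ∂ν :=
      lintegral_prod p hpmeas.aemeasurable
    calc J = ∫⁻ ω, (ν.prod ν) ((fun z => (z, ω)) ⁻¹' T) ∂P :=
          lintegral_congr fun ω => (h3 ω).symm
      _ = ((ν.prod ν).prod P) T := h2.symm
      _ = ∫⁻ z, p z ∂(ν.prod ν) := h1
      _ = ∫⁻ x, ∫⁻ y, p (x, y) ∂ν ∂ν := h4
  -- constants
  set Vb : ℝ≥0∞ := volume (Metric.ball (0 : EuclideanSpace ℝ (Fin d)) 1) with hVb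
  have hVbfin : Vb ≠ ⊤ := measure_ball_lt_top.ne
  set D : ℝ≥0∞ := ENNReal.ofReal (c ^ d) * Vb with hD
  have hDfin : D ≠ ⊤ := ENNReal.mul_ne_top ENNReal.ofReal_ne_top hVbfin
  have hnearmeas : ∀ x : Fin d → ℝ, MeasurableSet {y | torusDist d L x y ≤ c} := by
    intro x
    apply measurableSet_le _ measurable_const
    unfold torusDist
    fun_prop
  -- pointwise bound
  have hpoint : ∀ x ∈ box d L, ∀ y ∈ box d L,
      p (x, y) ≤ q x * q y + {y' | torusDist d L x y' ≤ c}.indicator (fun _ => q x) y := by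
    intro x hx y hy
    by_cases hfar : torusDist d L x y > c
    · have heq : p (x, y) = q x * q y := by
        have h1 := hindep x y hx hy hfar
        have hfin1 : P {ω | x ∈ ψ ω ∧ y ∈ ψ ω} ≠ ⊤ := measure_ne_top _ _
        have hfin2 : q x * q y ≠ ⊤ :=
          ENNReal.mul_ne_top (measure_ne_top _ _) (measure_ne_top _ _)
        rw [← ENNReal.toReal_mul] at h1
        exact (ENNReal.toReal_eq_toReal_iff' hfin1 hfin2).mp h1
      rw [heq]
      exact le_self_add
    · push_neg at hfar
      have h1 : p (x, y) ≤ q x := measure_mono fun ω hω => hω.1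
      have h2 : {y' | torusDist d L x y' ≤ c}.indicator (fun _ => q x) y = q x :=
        Set.indicator_of_mem (show y ∈ {y' | torusDist d L x y' ≤ c} from hfar) _
      rw [h2]
      exact le_add_left h1
  -- inner integral bound
  have hinner : ∀ x ∈ box d L, ∫⁻ y, p (x, y) ∂ν ≤ q x * I + q x * D := by
    intro x hx
    have hb1 : ∫⁻ y, p (x, y) ∂ν
        ≤ ∫⁻ y, (q x * q y + {y' | torusDist d L x y' ≤ c}.indicator (fun _ => q x) y) ∂ν := by
      apply lintegral_mono_ae
      filter_upwards [ae_restrict_mem hboxmeas] with y hy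
      exact hpoint x hx y hy
    have hb2 : ∫⁻ y, (q x * q y + {y' | torusDist d L x y' ≤ c}.indicator (fun _ => q x) y) ∂ν
        = q x * I + q x * ν {y' | torusDist d L x y' ≤ c} := by
      rw [lintegral_add_left (hqmeas.const_mul _), lintegral_const_mul _ hqmeas,
        lintegral_indicator (hnearmeas x), setLIntegral_const, ← hI, mul_comm (q x)]
    have hb3 : ν {y' | torusDist d L x y' ≤ c} ≤ D := by
      rw [hν, Measure.restrict_apply (hnearmeas x)]
      have heqset : {y' | torusDist d L x y' ≤ c} ∩ box d L
          = {y' | y' ∈ box d L ∧ torusDist d L x y' ≤ c} := by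
        ext y'; simp only [Set.mem_inter_iff, Set.mem_setOf_eq]; tauto
      rw [heqset]
      exact vol_torus_ball d hL hc0 x hx
    calc ∫⁻ y, p (x, y) ∂ν ≤ q x * I + q x * ν {y' | torusDist d L x y' ≤ c} :=
          hb1.trans (le_of_eq hb2)
      _ ≤ q x * I + q x * D := add_le_add_right (mul_le_mul_right hb3 _) _
  -- outer integral
  have houter : ∫⁻ x, ∫⁻ y, p (x, y) ∂ν ∂ν ≤ I * I + I * D := by
    have hstep : ∫⁻ x, ∫⁻ y, p (x, y) ∂ν ∂ν ≤ ∫⁻ x, (q x * I + q x * D) ∂ν := by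
      apply lintegral_mono_ae
      filter_upwards [ae_restrict_mem hboxmeas] with x hx
      exact hinner x hx
    refine hstep.trans (le_of_eq ?_)
    rw [lintegral_add_left (hqmeas.mul_const _), lintegral_mul_const _ hqmeas,
      lintegral_mul_const _ hqmeas, ← hI]
  have hJle : J ≤ I * I + I * D := by rw [hstepB]; exact houter
  -- convert to real integrals
  have hEY : ∫ ω, Y ω ∂P = I.toReal := by
    have h0 : ∫ ω, Y ω ∂P = ∫ ω, (ν (ψ ω)).toReal ∂P := by
      apply integral_congr_ae
      filter_upwards with ω
      rw [hY ω, hψν ω]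
    rw [h0, integral_toReal hYmeasE.aemeasurable
      (Eventually.of_forall fun ω => measure_lt_top ν _), hstepA]
  have hEY2 : ∫ ω, Y ω ^ 2 ∂P = J.toReal := by
    have h0 : ∫ ω, Y ω ^ 2 ∂P = ∫ ω, (ν (ψ ω) * ν (ψ ω)).toReal ∂P := by
      apply integral_congr_ae
      filter_upwards with ω
      rw [hY ω, hψν ω, ENNReal.toReal_mul, sq]
    rw [h0, integral_toReal (f := fun ω => ν (ψ ω) * ν (ψ ω)) (hYmeasE.mul hYmeasE).aemeasurable
      (Eventually.of_forall fun ω =>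
        ENNReal.mul_lt_top (measure_lt_top ν _) (measure_lt_top ν _)), hJ]
  have hYalt : Y = fun ω => (ν (ψ ω)).toReal := funext fun ω => by rw [hY ω, hψν ω]
  have hMem : MemLp Y 2 P := by
    apply memLp_of_bounded (a := 0) (b := ((volume (box d L))).toReal)
    · filter_upwards with ω
      constructor
      · rw [hY ω]; exact ENNReal.toReal_nonneg
      · rw [hY ω]
        exact ENNReal.toReal_mono hboxfin.ne (measure_mono (hsub ω))
    · rw [hYalt]
      exact (hYmeasE.ennreal_toReal).aestronglyMeasurable
  have hvar : variance Y P = J.toReal - I.toReal ^ 2 := by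
    rw [variance_eq_sub hMem, ← hEY2, ← hEY]
    try congr 1
    try rfl
  have hRHS1 : I * I ≠ ⊤ := ENNReal.mul_ne_top hIfin hIfin
  have hRHS2 : I * D ≠ ⊤ := ENNReal.mul_ne_top hIfin hDfin
  have hRHSfin : I * I + I * D ≠ ⊤ := ENNReal.add_ne_top.mpr ⟨hRHS1, hRHS2⟩
  have h5 : J.toReal ≤ I.toReal * I.toReal + I.toReal * D.toReal := by
    have h6 := ENNReal.toReal_mono hRHSfin hJle
    rwa [ENNReal.toReal_add hRHS1 hRHS2, ENNReal.toReal_mul, ENNReal.toReal_mul] at h6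
  have hDval : D.toReal = c ^ d * unitBallVol d := by
    rw [hD, ENNReal.toReal_mul, ENNReal.toReal_ofReal (by positivity)]
    rfl
  rw [hvar, hEY]
  have hsq : I.toReal ^ 2 = I.toReal * I.toReal := sq I.toReal
  calc J.toReal - I.toReal ^ 2
      ≤ (I.toReal * I.toReal + I.toReal * D.toReal) - I.toReal ^ 2 := by
        exact sub_le_sub_right h5 _
    _ = unitBallVol d * c ^ d * I.toReal := by rw [hDval, hsq]; ring
end
end

section
/- Let τ_1 be exponential with rate c_1 and for 2 ≤ j ≤ k let τ_j be independent random variables with P(τ_j > u) = exp(−c_j γ_d u^{d+1}/(d+1)) for 0 < u < 1/2. Then for 0 < t < 1/2: P(τ_1 + ⋯ + τ_k ≤ t) ≥ J_k(t) γ_d^{k−1} c_1⋯c_k (d!)^{k−1} t^{(k−1)d+k}/((k−1)d+k)!, where J_k(t) = e^{−c_1 t} ∏_{j=2}^k exp(−c_j γ_d t^{d+1}/(d+1)). -/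
open MeasureTheory ProbabilityTheory

noncomputable section

open intervalIntegral Set
open scoped ENNReal

lemma beta_nat (p : ℕ) : ∀ (q : ℕ) (s : ℝ),
    ∫ x in (0:ℝ)..s, x ^ p * (s - x) ^ q
      = (p.factorial * q.factorial / (p + q + 1).factorial) * s ^ (p + q + 1) := by
  induction p with
  | zero =>
    intro q s
    simp only [pow_zero, one_mul]
    rw [integral_comp_sub_left (fun x => x ^ q) s]
    simp [integral_pow]
    rw [Nat.factorial_succ]
    push_cast
    field_simp
  | succ p ih =>
    intro q s
    have hq1 : ((q:ℝ)+1) ≠ 0 := by positivity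
    have hu : ∀ x ∈ Set.uIcc (0:ℝ) s, HasDerivAt (fun y => y ^ (p+1))
        (((p:ℝ)+1) * x ^ p) x := by
      intro x _
      simpa using (hasDerivAt_pow (p+1) x)
    have hv : ∀ x ∈ Set.uIcc (0:ℝ) s, HasDerivAt (fun y => -(s - y) ^ (q+1) / ((q:ℝ)+1))
        ((s - x) ^ q) x := by
      intro x _
      have h1 : HasDerivAt (fun y : ℝ => s - y) (-1) x := by
        simpa using (hasDerivAt_id x).const_sub s
      have h2 := (h1.pow (q+1)).neg.div_const ((q:ℝ)+1)
      refine h2.congr_deriv ?_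
      rw [Nat.add_sub_cancel, div_eq_iff hq1]
      push_cast
      ring
    have H := integral_mul_deriv_eq_deriv_mul hu hv
      (by apply Continuous.intervalIntegrable; fun_prop)
      (by apply Continuous.intervalIntegrable; fun_prop)
    rw [H]
    have e2 : ∀ x : ℝ, ((p:ℝ)+1) * x ^ p * (-(s - x) ^ (q + 1) / ((q:ℝ) + 1))
        = (-(((p:ℝ)+1) / ((q:ℝ)+1))) * (x ^ p * (s - x) ^ (q+1)) := by
      intro x; field_simp
    rw [intervalIntegral.integral_congr (g := fun x =>
        (-(((p:ℝ)+1) / ((q:ℝ)+1))) * (x ^ p * (s - x) ^ (q+1))) (fun x _ => e2 x),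
      intervalIntegral.integral_const_mul, ih (q+1) s]
    have e1 : p + (q+1) + 1 = p + 1 + q + 1 := by ring
    rw [e1, Nat.factorial_succ q, Nat.factorial_succ p]
    have h2 : ((p + 1 + q + 1).factorial : ℝ) ≠ 0 := by positivity
    push_cast
    field_simp
    ring

lemma one_sub_exp_neg_ge (x y : ℝ) (hx : 0 ≤ x) (hxy : x ≤ y) :
    Real.exp (-y) * x ≤ 1 - Real.exp (-x) := by
  have h1 : Real.exp (-y) ≤ Real.exp (-x) := Real.exp_le_exp.mpr (by linarith)
  have h2 : x + 1 ≤ Real.exp x := Real.add_one_le_exp x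
  have h3 : 0 < Real.exp (-x) := Real.exp_pos _
  have h4 : Real.exp (-x) * Real.exp x = 1 := by
    rw [← Real.exp_add]; simp
  nlinarith [mul_le_mul_of_nonneg_right h1 hx]

lemma step_integral (d n : ℕ) (a t s : ℝ) (ha : 0 < a) (hs : 0 < s) (hst : s ≤ t)
    (ht : t < 1/2) (ν : Measure ℝ) [IsProbabilityMeasure ν]
    (h0 : ν (Set.Iic 0) = 0)
    (hcdf : ∀ v ∈ Set.Ioo (0:ℝ) (1/2),
      ν (Set.Iic v) = ENNReal.ofReal (1 - Real.exp (-(a * v ^ (d+1) / (d+1))))) :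
    ∫⁻ u in Set.Ioo 0 s, ENNReal.ofReal ((s - u) ^ (n+1)) ∂ν
      ≥ ENNReal.ofReal (a * Real.exp (-(a * t ^ (d+1) / (d+1)))
          * (((n+1).factorial * d.factorial : ℝ) / ((n + d + 2).factorial))
          * s ^ (n + d + 2)) := by
  have ht0 : 0 < t := lt_of_lt_of_le hs hst
  set μ := ν.restrict (Set.Ioo 0 s) with hμ
  set lam := volume.restrict (Set.Ioo 0 s) with hlam
  set g : ℝ → ℝ≥0∞ := fun v => ENNReal.ofReal (((n:ℝ)+1) * (s - v) ^ n) with hg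
  set F : ℝ → ℝ → ℝ≥0∞ :=
    fun u v => ({p : ℝ × ℝ | p.1 ≤ p.2}.indicator (fun p => g p.2)) (u, v) with hF
  have hsetm : MeasurableSet {p : ℝ × ℝ | p.1 ≤ p.2} :=
    measurableSet_le measurable_fst measurable_snd
  have hgm : Measurable g := by
    apply ENNReal.measurable_ofReal.comp
    fun_prop
  have hFm : Measurable (Function.uncurry F) := by
    have : Function.uncurry F
        = ({p : ℝ × ℝ | p.1 ≤ p.2}.indicator (fun p => g p.2)) := rfl
    rw [this]
    exact (hgm.comp measurable_snd).indicator hsetm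
  -- inner equality in v, for fixed u ∈ Ioo 0 s
  have hinner : ∀ u ∈ Set.Ioo (0:ℝ) s,
      ∫⁻ v, F u v ∂lam = ENNReal.ofReal ((s - u) ^ (n+1)) := by
    intro u hu
    have hFu : (fun v => F u v) = (Set.Ici u).indicator g := by
      funext v
      by_cases h : u ≤ v
      · simp [hF, Set.indicator_of_mem, h, Set.mem_Ici.mpr h, Set.mem_setOf_eq]
      · simp [hF, Set.indicator_of_notMem, h, Set.mem_Ici, Set.mem_setOf_eq]
    rw [hFu, hlam, lintegral_indicator measurableSet_Ici, Measure.restrict_restrict measurableSet_Ici]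
    have hset2 : Set.Ici u ∩ Set.Ioo 0 s = Set.Ico u s := by
      ext x; simp only [Set.mem_inter_iff, Set.mem_Ici, Set.mem_Ioo, Set.mem_Ico]
      constructor
      · rintro ⟨h1, _, h3⟩; exact ⟨h1, h3⟩
      · rintro ⟨h1, h2⟩; exact ⟨h1, lt_of_lt_of_le hu.1 h1, h2⟩
    rw [hset2]
    have hcont : Continuous (fun v : ℝ => ((n:ℝ)+1) * (s - v) ^ n) := by fun_prop
    have hint : IntegrableOn (fun v : ℝ => ((n:ℝ)+1) * (s - v) ^ n) (Set.Ico u s) volume :=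
      (hcont.integrableOn_Icc).mono_set Set.Ico_subset_Icc_self
    have hnn : 0 ≤ᵐ[volume.restrict (Set.Ico u s)] fun v : ℝ => ((n:ℝ)+1) * (s - v) ^ n := by
      filter_upwards [ae_restrict_mem measurableSet_Ico] with v hv
      simp only [Pi.zero_apply]
      have : 0 ≤ s - v := by linarith [hv.2]
      positivity
    rw [hg, ← ofReal_integral_eq_lintegral_ofReal hint hnn]
    congr 1
    rw [MeasureTheory.integral_Ico_eq_integral_Ioo, ← MeasureTheory.integral_Ioc_eq_integral_Ioo,
      ← intervalIntegral.integral_of_le (le_of_lt hu.2)]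
    rw [intervalIntegral.integral_const_mul, integral_comp_sub_left (fun x => x ^ n) s]
    simp only [sub_self, sub_zero, integral_pow]
    have : ((n:ℝ)+1) ≠ 0 := by positivity
    field_simp
    simp
  -- inner equality in u, for fixed v ∈ Ioo 0 s
  have hinner2 : ∀ v ∈ Set.Ioo (0:ℝ) s,
      ∫⁻ u, F u v ∂μ = g v * ν (Set.Iic v) := by
    intro v hv
    have hFv : (fun u => F u v) = (Set.Iic v).indicator (fun _ => g v) := by
      funext u
      by_cases h : u ≤ v
      · simp [hF, Set.indicator_of_mem, h, Set.mem_Iic.mpr h, Set.mem_setOf_eq]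
      · simp [hF, Set.indicator_of_notMem, h, Set.mem_Iic, Set.mem_setOf_eq]
    rw [hFv, hμ, lintegral_indicator measurableSet_Iic]
    rw [setLIntegral_const, Measure.restrict_apply measurableSet_Iic]
    have hset3 : Set.Iic v ∩ Set.Ioo 0 s = Set.Ioc 0 v := by
      ext x; simp only [Set.mem_inter_iff, Set.mem_Iic, Set.mem_Ioo, Set.mem_Ioc]
      constructor
      · rintro ⟨h1, h2, _⟩; exact ⟨h2, h1⟩
      · rintro ⟨h1, h2⟩; exact ⟨h2, h1, lt_of_le_of_lt h2 hv.2⟩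
    rw [hset3]
    congr 1
    have : ν (Set.Iic v) = ν (Set.Iic 0) + ν (Set.Ioc 0 v) := by
      rw [← measure_union (Set.Iic_disjoint_Ioc le_rfl) measurableSet_Ioc,
        Set.Iic_union_Ioc_eq_Iic (le_of_lt hv.1)]
    rw [this, h0, zero_add]
  -- swap
  have hswap := lintegral_lintegral_swap (μ := μ) (ν := lam) (f := F) hFm.aemeasurable
  have hLHS : ∫⁻ u in Set.Ioo 0 s, ENNReal.ofReal ((s - u) ^ (n+1)) ∂ν
      = ∫⁻ v, ∫⁻ u, F u v ∂μ ∂lam := by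
    rw [← hswap]
    exact setLIntegral_congr_fun measurableSet_Ioo
      (fun u hu => (hinner u hu).symm)
  rw [hLHS]
  have hRHSeq : ∫⁻ v, ∫⁻ u, F u v ∂μ ∂lam
      = ∫⁻ v in Set.Ioo 0 s, g v * ν (Set.Iic v) ∂volume := by
    exact setLIntegral_congr_fun measurableSet_Ioo
      (fun v hv => hinner2 v hv)
  rw [hRHSeq]
  -- lower bound the CDF
  set K : ℝ := Real.exp (-(a * t ^ (d+1) / (d+1))) * a / ((d:ℝ)+1) with hK
  have hKpos : 0 < K := by positivity
  have hbound : ∀ v ∈ Set.Ioo (0:ℝ) s,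
      ENNReal.ofReal ((((n:ℝ)+1) * (s - v) ^ n) * (K * v ^ (d+1))) ≤ g v * ν (Set.Iic v) := by
    intro v hv
    have hv2 : v ∈ Set.Ioo (0:ℝ) (1/2) := ⟨hv.1, lt_of_lt_of_le hv.2 (le_of_lt (lt_of_le_of_lt hst ht))⟩
    rw [hcdf v hv2]
    have hx : (0:ℝ) ≤ a * v ^ (d+1) / (d+1) :=
      div_nonneg (mul_nonneg ha.le (pow_nonneg hv.1.le _)) (by positivity)
    have hxy : a * v ^ (d+1) / (d+1) ≤ a * t ^ (d+1) / (d+1) := by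
      gcongr
      · exact hv.1.le
      · exact hv.2.le.trans hst
    have hkey : K * v ^ (d+1) ≤ 1 - Real.exp (-(a * v ^ (d+1) / (d+1))) := by
      have := one_sub_exp_neg_ge (a * v ^ (d+1) / (d+1)) (a * t ^ (d+1) / (d+1)) hx hxy
      calc K * v ^ (d+1)
          = Real.exp (-(a * t ^ (d+1) / (d+1))) * (a * v ^ (d+1) / ((d:ℝ)+1)) := by
            rw [hK]; ring
        _ ≤ 1 - Real.exp (-(a * v ^ (d+1) / (d+1))) := this
    have hA : (0:ℝ) ≤ ((n:ℝ)+1) * (s - v) ^ n := by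
      have : 0 ≤ s - v := by linarith [hv.2]
      positivity
    rw [ENNReal.ofReal_mul hA, hg]
    exact mul_le_mul_right (ENNReal.ofReal_le_ofReal hkey) _
  -- conclude
  have hcont2 : Continuous (fun v : ℝ => (((n:ℝ)+1) * (s - v) ^ n) * (K * v ^ (d+1))) := by
    fun_prop
  have hint2 : IntegrableOn (fun v : ℝ => (((n:ℝ)+1) * (s - v) ^ n) * (K * v ^ (d+1)))
      (Set.Ioo 0 s) volume :=
    (hcont2.integrableOn_Icc).mono_set Set.Ioo_subset_Icc_self
  have hnn2 : 0 ≤ᵐ[volume.restrict (Set.Ioo 0 s)]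
      fun v : ℝ => (((n:ℝ)+1) * (s - v) ^ n) * (K * v ^ (d+1)) := by
    filter_upwards [ae_restrict_mem measurableSet_Ioo] with v hv
    simp only [Pi.zero_apply]
    have h1 : 0 ≤ s - v := by linarith [hv.2]
    have h2 : 0 ≤ v := hv.1.le
    positivity
  have hmono : ∫⁻ v in Set.Ioo 0 s,
        ENNReal.ofReal ((((n:ℝ)+1) * (s - v) ^ n) * (K * v ^ (d+1))) ∂volume
      ≤ ∫⁻ v in Set.Ioo 0 s, g v * ν (Set.Iic v) ∂volume :=
    setLIntegral_mono' measurableSet_Ioo hbound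
  refine le_trans ?_ hmono
  rw [← ofReal_integral_eq_lintegral_ofReal hint2 hnn2]
  apply ENNReal.ofReal_le_ofReal
  have heq : ∀ v : ℝ, (((n:ℝ)+1) * (s - v) ^ n) * (K * v ^ (d+1))
      = (K * ((n:ℝ)+1)) * (v ^ (d+1) * (s - v) ^ n) := by intro v; ring
  rw [show (fun v : ℝ => (((n:ℝ)+1) * (s - v) ^ n) * (K * v ^ (d+1)))
      = fun v : ℝ => (K * ((n:ℝ)+1)) * (v ^ (d+1) * (s - v) ^ n) from funext heq]
  rw [MeasureTheory.integral_const_mul, ← MeasureTheory.integral_Ioc_eq_integral_Ioo,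
    ← intervalIntegral.integral_of_le hs.le, beta_nat (d+1) n s]
  have e1 : d + 1 + n + 1 = n + d + 2 := by omega
  rw [e1]
  rw [hK, Nat.factorial_succ (n), Nat.factorial_succ (d)]
  have h2 : ((n + d + 2).factorial : ℝ) ≠ 0 := by positivity
  have h3 : ((d:ℝ) + 1) ≠ 0 := by positivity
  push_cast
  rw [div_mul_eq_mul_div, div_mul_eq_mul_div, div_mul_eq_mul_div]
  apply le_of_eq
  field_simp

lemma conv_step {Ω : Type*} [MeasurableSpace Ω] (P : Measure Ω) [IsProbabilityMeasure P]
    (X Y : Ω → ℝ) (hX : Measurable X) (hY : Measurable Y)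
    (hind : IndepFun X Y P) (s : ℝ) :
    P {ω | X ω + Y ω ≤ s} = ∫⁻ u, (P.map Y) (Set.Iic (s - u)) ∂(P.map X) := by
  have hmap : P.map (fun ω => (X ω, Y ω)) = (P.map X).prod (P.map Y) :=
    (indepFun_iff_map_prod_eq_prod_map_map hX.aemeasurable hY.aemeasurable).mp hind
  have hset : MeasurableSet {p : ℝ × ℝ | p.1 + p.2 ≤ s} :=
    measurableSet_le (measurable_fst.add measurable_snd) measurable_const
  have h1 : {ω | X ω + Y ω ≤ s} = (fun ω => (X ω, Y ω)) ⁻¹' {p : ℝ × ℝ | p.1 + p.2 ≤ s} := rfl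
  have : IsProbabilityMeasure (P.map Y) := Measure.isProbabilityMeasure_map hY.aemeasurable
  rw [h1, ← Measure.map_apply (hX.prodMk hY) hset, hmap, Measure.prod_apply hset]
  congr 1
  ext u
  congr 1
  ext y
  simp [Set.Iic, add_comm]
  constructor <;> intro h <;> linarith

lemma cdf_of_tail {Ω : Type*} [MeasurableSpace Ω] (P : Measure Ω) [IsProbabilityMeasure P]
    (X : Ω → ℝ) (hX : Measurable X) (v : ℝ) :
    P {ω | X ω ≤ v} = ENNReal.ofReal (1 - (P {ω | X ω > v}).toReal) := by
  have hA : MeasurableSet {ω | X ω > v} := hX measurableSet_Ioi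
  have hset : {ω | X ω ≤ v} = {ω | X ω > v}ᶜ := by
    ext ω; simp [not_lt]
  rw [hset, measure_compl hA (measure_ne_top _ _), measure_univ,
    ENNReal.ofReal_sub _ ENNReal.toReal_nonneg, ENNReal.ofReal_one,
    ENNReal.ofReal_toReal (measure_ne_top _ _)]

lemma tau_le_zero (Ω : Type*) [MeasurableSpace Ω] (P : Measure Ω) [IsProbabilityMeasure P]
    (X : Ω → ℝ) (hX : Measurable X) (a : ℝ) (ha : 0 < a) (d : ℕ)
    (htail : ∀ u ∈ Set.Ioo (0:ℝ) (1/2),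
      (P {ω | X ω > u}).toReal = Real.exp (-(a * u ^ (d+1) / (d+1)))) :
    P {ω | X ω ≤ 0} = 0 := by
  have key : ∀ u ∈ Set.Ioo (0:ℝ) (1/2), (P {ω | X ω ≤ 0}).toReal ≤ a * u := by
    intro u hu
    have hsub : {ω | X ω ≤ 0} ⊆ {ω | X ω > u}ᶜ := by
      intro ω hω
      simp only [Set.mem_compl_iff, Set.mem_setOf_eq, not_lt]
      exact le_trans hω hu.1.le
    have hA : MeasurableSet {ω | X ω > u} := hX measurableSet_Ioi
    have h1 : (P {ω | X ω ≤ 0}).toReal ≤ (P ({ω | X ω > u}ᶜ)).toReal :=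
      ENNReal.toReal_mono (measure_ne_top _ _) (measure_mono hsub)
    have h2 : (P ({ω | X ω > u}ᶜ)).toReal = 1 - Real.exp (-(a * u ^ (d+1) / (d+1))) := by
      have hcompl : {ω | X ω > u}ᶜ = {ω | X ω ≤ u} := by ext ω; simp [not_lt]
      have hnn : 0 ≤ 1 - Real.exp (-(a * u ^ (d+1) / (d+1))) := by
        have : Real.exp (-(a * u ^ (d+1) / (d+1))) ≤ 1 := by
          apply Real.exp_le_one_iff.mpr
          have : (0:ℝ) ≤ a * u ^ (d+1) / (d+1) :=
            div_nonneg (mul_nonneg ha.le (pow_nonneg hu.1.le _)) (by positivity)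
          linarith
        linarith
      rw [hcompl, cdf_of_tail P X hX u, htail u hu, ENNReal.toReal_ofReal hnn]
    have hx : (0:ℝ) ≤ a * u ^ (d+1) / (d+1) :=
      div_nonneg (mul_nonneg ha.le (pow_nonneg hu.1.le _)) (by positivity)
    have h3 : 1 - Real.exp (-(a * u ^ (d+1) / (d+1))) ≤ a * u ^ (d+1) / (d+1) := by
      have := Real.add_one_le_exp (-(a * u ^ (d+1) / (d+1)))
      linarith
    have h4 : a * u ^ (d+1) / (d+1) ≤ a * u := by
      have hu1 : u ≤ 1 := by linarith [hu.2]
      have hp : u ^ (d+1) ≤ u := by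
        calc u ^ (d+1) ≤ u ^ 1 := pow_le_pow_of_le_one hu.1.le hu1 (by omega)
          _ = u := pow_one u
      have hd1 : (1:ℝ) ≤ (d:ℝ)+1 := by
        have : (0:ℝ) ≤ (d:ℝ) := Nat.cast_nonneg d
        linarith
      calc a * u ^ (d+1) / ((d:ℝ)+1) ≤ a * u ^ (d+1) :=
            div_le_self (mul_nonneg ha.le (pow_nonneg hu.1.le _)) hd1
        _ ≤ a * u := by nlinarith
    linarith
  -- conclude toReal = 0
  have hr : (P {ω | X ω ≤ 0}).toReal = 0 := by
    by_contra h
    have hrpos : 0 < (P {ω | X ω ≤ 0}).toReal :=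
      lt_of_le_of_ne ENNReal.toReal_nonneg (Ne.symm h)
    set r := (P {ω | X ω ≤ 0}).toReal
    have hu : min (1/4) (r / (2*a)) ∈ Set.Ioo (0:ℝ) (1/2) := by
      constructor
      · apply lt_min (by norm_num) (by positivity)
      · exact lt_of_le_of_lt (min_le_left _ _) (by norm_num)
    have := key _ hu
    have h5 : a * min (1/4) (r / (2*a)) ≤ a * (r / (2*a)) :=
      mul_le_mul_of_nonneg_left (min_le_right _ _) ha.le
    have h6 : a * (r / (2*a)) = r/2 := by field_simp
    linarith
  have := ENNReal.toReal_eq_zero_iff (P {ω | X ω ≤ 0}) |>.mp hr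
  rcases this with h | h
  · exact h
  · exact absurd h (measure_ne_top _ _)

lemma unitBallVol_pos (d : ℕ) : 0 < unitBallVol d :=
  ENNReal.toReal_pos (Metric.measure_ball_pos volume _ one_pos).ne' measure_ball_lt_top.ne

lemma main_induction
    (d k : ℕ) (hd : 0 < d) (c : ℕ → ℝ) (hc : ∀ j, 0 < c j)
    {Ω : Type*} [MeasurableSpace Ω] (P : Measure Ω) [IsProbabilityMeasure P]
    (τ : ℕ → Ω → ℝ) (hmeas : ∀ j, Measurable (τ j))
    (hindep : iIndepFun (m := fun _ => Real.measurableSpace) τ P)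
    (hτ1 : ∀ u : ℝ, 0 ≤ u → (P {ω | τ 1 ω > u}).toReal = Real.exp (-(c 1) * u))
    (hτj : ∀ j ∈ Finset.Icc 2 k, ∀ u ∈ Set.Ioo (0:ℝ) (1/2),
      (P {ω | τ j ω > u}).toReal
        = Real.exp (-(c j) * unitBallVol d * u ^ (d + 1) / (d + 1)))
    (t : ℝ) (ht0 : 0 < t) (ht : t < 1/2) :
    ∀ r : ℕ, r + 1 ≤ k → ∀ s : ℝ, 0 < s → s ≤ t →
      ENNReal.ofReal ((Real.exp (-(c 1) * t)
          * ∏ j ∈ Finset.Icc 2 (r+1),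
              Real.exp (-(c j) * unitBallVol d * t ^ (d+1) / (d+1)))
        * unitBallVol d ^ r * (∏ j ∈ Finset.Icc 1 (r+1), c j) * (d.factorial : ℝ) ^ r
        * s ^ (r * (d+1) + 1) / ((r * (d+1) + 1).factorial))
      ≤ P {ω | ∑ j ∈ Finset.Icc 1 (r+1), τ j ω ≤ s} := by
  intro r
  induction r with
  | zero =>
    intro _ s hs hst
    have h1 : Finset.Icc 2 1 = (∅ : Finset ℕ) := by decide
    have h2 : Finset.Icc 1 1 = ({1} : Finset ℕ) := by decide
    simp only [h1, h2, Finset.prod_empty, Finset.prod_singleton, Finset.sum_singleton,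
      mul_one, pow_zero, one_mul, zero_mul, zero_add, pow_one, Nat.factorial_one,
      Nat.cast_one, div_one]
    rw [cdf_of_tail P (τ 1) (hmeas 1) s]
    apply ENNReal.ofReal_le_ofReal
    have := one_sub_exp_neg_ge (c 1 * s) (c 1 * t)
      (mul_nonneg (hc 1).le hs.le)
      (mul_le_mul_of_nonneg_left hst (hc 1).le)
    rw [hτ1 s hs.le]
    rw [show -(c 1) * s = -(c 1 * s) by ring, show -(c 1) * t = -(c 1 * t) by ring]
    linarith
  | succ r ih =>
    intro hrk s hs hst
    have hrk' : r + 1 ≤ k := by omega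
    set γ := unitBallVol d with hγ
    have hγpos : 0 < γ := unitBallVol_pos d
    set S : Ω → ℝ := fun ω => ∑ j ∈ Finset.Icc 1 (r+1), τ j ω with hS
    set X : Ω → ℝ := τ (r+2) with hX
    have hSmeas : Measurable S := by
      apply Finset.measurable_sum
      intro i _
      exact hmeas i
    have hXmeas : Measurable X := hmeas (r+2)
    have hmem : r + 2 ∈ Finset.Icc 2 k := by
      simp only [Finset.mem_Icc]; omega
    set a : ℝ := c (r+2) * γ with ha
    have hapos : 0 < a := mul_pos (hc _) hγpos
    have htail : ∀ u ∈ Set.Ioo (0:ℝ) (1/2),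
        (P {ω | X ω > u}).toReal = Real.exp (-(a * u ^ (d+1) / (d+1))) := by
      intro u hu
      rw [hτj (r+2) hmem u hu]
      congr 1
      rw [ha]
      ring
    -- independence
    have hindS : IndepFun X S P := by
      have h := hindep.indepFun_finset_sum_of_notMem hmeas
        (show r + 2 ∉ Finset.Icc 1 (r+1) by simp [Finset.mem_Icc])
      have heq : (∑ j ∈ Finset.Icc 1 (r+1), τ j) = S := by
        funext ω
        simp [hS, Finset.sum_apply]
      rw [heq] at h
      exact h.symm
    -- set rewriting
    have hsetr : {ω | ∑ j ∈ Finset.Icc 1 (r+2), τ j ω ≤ s}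
        = {ω | X ω + S ω ≤ s} := by
      ext ω
      simp only [Set.mem_setOf_eq, hS, hX]
      rw [show r + 2 = (r+1) + 1 from rfl, Finset.sum_Icc_succ_top (by omega : 1 ≤ r+1+1)]
      constructor <;> intro h <;> linarith
    rw [hsetr, conv_step P X S hXmeas hSmeas hindS s]
    -- properties of ν := P.map X
    set ν : Measure ℝ := P.map X with hν
    have : IsProbabilityMeasure ν := Measure.isProbabilityMeasure_map hXmeas.aemeasurable
    have hν0 : ν (Set.Iic 0) = 0 := by
      rw [hν, Measure.map_apply hXmeas measurableSet_Iic]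
      exact tau_le_zero Ω P X hXmeas a hapos d htail
    have hνcdf : ∀ v ∈ Set.Ioo (0:ℝ) (1/2),
        ν (Set.Iic v) = ENNReal.ofReal (1 - Real.exp (-(a * v ^ (d+1) / (d+1)))) := by
      intro v hv
      rw [hν, Measure.map_apply hXmeas measurableSet_Iic]
      have : X ⁻¹' Set.Iic v = {ω | X ω ≤ v} := rfl
      rw [this, cdf_of_tail P X hXmeas v, htail v hv]
    -- constants
    set E1 : ℝ := Real.exp (-(c 1) * t) with hE1
    set Em : ℝ := ∏ j ∈ Finset.Icc 2 (r+1),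
        Real.exp (-(c j) * γ * t ^ (d+1) / (d+1)) with hEm
    set Cm : ℝ := (E1 * Em) * γ ^ r * (∏ j ∈ Finset.Icc 1 (r+1), c j)
        * (d.factorial : ℝ) ^ r with hCm
    have hCmpos : 0 < Cm := by
      rw [hCm, hE1, hEm]
      apply mul_pos
      apply mul_pos
      apply mul_pos
      · apply mul_pos (Real.exp_pos _)
        exact Finset.prod_pos (fun j _ => Real.exp_pos _)
      · positivity
      · exact Finset.prod_pos (fun j _ => hc j)
      · positivity
    set n : ℕ := r * (d+1) with hn
    have hNm : r * (d+1) + 1 = n + 1 := rfl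
    -- pointwise bound from IH, then step_integral
    have key : ∫⁻ u, (P.map S) (Set.Iic (s - u)) ∂ν
        ≥ ENNReal.ofReal (Cm / (n+1).factorial)
          * ENNReal.ofReal (a * Real.exp (-(a * t ^ (d+1) / (d+1)))
            * (((n+1).factorial * d.factorial : ℝ) / ((n + d + 2).factorial))
            * s ^ (n + d + 2)) := by
      calc ∫⁻ u, (P.map S) (Set.Iic (s - u)) ∂ν
          ≥ ∫⁻ u in Set.Ioo 0 s, (P.map S) (Set.Iic (s - u)) ∂ν :=
            setLIntegral_le_lintegral _ _
        _ ≥ ∫⁻ u in Set.Ioo 0 s,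
              ENNReal.ofReal (Cm / (n+1).factorial) * ENNReal.ofReal ((s-u) ^ (n+1)) ∂ν := by
            apply setLIntegral_mono' measurableSet_Ioo
            intro u hu
            have hsu : 0 < s - u := by linarith [hu.2]
            have hsu2 : s - u ≤ t := by linarith [hu.1]
            have hIH := ih hrk' (s - u) hsu hsu2
            rw [← ENNReal.ofReal_mul (by positivity : (0:ℝ) ≤ Cm / (n+1).factorial)]
            calc ENNReal.ofReal (Cm / (n+1).factorial * (s-u) ^ (n+1))
                = ENNReal.ofReal (Cm * (s-u) ^ (r*(d+1)+1) / (r*(d+1)+1).factorial) := by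
                  rw [hNm]; congr 1; ring
              _ ≤ P {ω | S ω ≤ s - u} := by
                  rw [hCm] at *
                  exact hIH
              _ = (P.map S) (Set.Iic (s - u)) := by
                  rw [Measure.map_apply hSmeas measurableSet_Iic]; rfl
        _ = ENNReal.ofReal (Cm / (n+1).factorial)
            * ∫⁻ u in Set.Ioo 0 s, ENNReal.ofReal ((s-u) ^ (n+1)) ∂ν := by
            rw [lintegral_const_mul _ (by fun_prop)]
        _ ≥ ENNReal.ofReal (Cm / (n+1).factorial)
            * ENNReal.ofReal (a * Real.exp (-(a * t ^ (d+1) / (d+1)))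
              * (((n+1).factorial * d.factorial : ℝ) / ((n + d + 2).factorial))
              * s ^ (n + d + 2)) := by
            apply mul_le_mul_right
            exact step_integral d n a t s hapos hs hst ht ν hν0 hνcdf
    refine le_trans ?_ key
    rw [← ENNReal.ofReal_mul (by positivity : (0:ℝ) ≤ Cm / (n+1).factorial)]
    apply ENNReal.ofReal_le_ofReal
    apply le_of_eq
    -- the constants identity
    have hprodE : ∏ j ∈ Finset.Icc 2 (r+2),
        Real.exp (-(c j) * γ * t ^ (d+1) / (d+1))
        = Em * Real.exp (-(a * t ^ (d+1) / (d+1))) := by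
      rw [show r + 2 = (r+1) + 1 from rfl, Finset.prod_Icc_succ_top (by omega : 2 ≤ r+1+1), hEm]
      congr 2
      rw [ha]; ring
    have hprodc : ∏ j ∈ Finset.Icc 1 (r+2), c j
        = (∏ j ∈ Finset.Icc 1 (r+1), c j) * c (r+2) := by
      rw [show r + 2 = (r+1) + 1 from rfl, Finset.prod_Icc_succ_top (by omega : 1 ≤ r+1+1)]
    have hexp : (r+1) * (d+1) + 1 = n + d + 2 := by rw [hn]; ring
    rw [hprodE, hprodc, hexp, hCm]
    have hf1 : ((n+1).factorial : ℝ) ≠ 0 := by positivity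
    have hf2 : ((n+d+2).factorial : ℝ) ≠ 0 := by positivity
    rw [ha]
    field_simp
    ring

/-- Lower bound for `P(τ_1 + ⋯ + τ_k ≤ t)` for `0 < t < 1/2`, where `τ_1` is exponential
with rate `c_1` and `τ_j` (for `2 ≤ j ≤ k`) has tail `exp(-c_j γ_d u^{d+1}/(d+1))` on
`(0, 1/2)`, the `τ_j` being independent. -/
theorem sum_mutation_waiting_times_lower_bound
    (d k : ℕ) (hd : 0 < d) (hk : 1 ≤ k) (c : ℕ → ℝ) (hc : ∀ j, 0 < c j)
    {Ω : Type*} [MeasurableSpace Ω] (P : Measure Ω) [IsProbabilityMeasure P]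
    (τ : ℕ → Ω → ℝ)
    (hmeas : ∀ j, Measurable (τ j))
    (hnonneg : ∀ j ω, 0 ≤ τ j ω)
    (hindep : iIndepFun (m := fun _ => Real.measurableSpace) τ P)
    (hτ1 : ∀ u : ℝ, 0 ≤ u → (P {ω | τ 1 ω > u}).toReal = Real.exp (-(c 1) * u))
    (hτj : ∀ j ∈ Finset.Icc 2 k, ∀ u ∈ Set.Ioo (0:ℝ) (1/2),
      (P {ω | τ j ω > u}).toReal
        = Real.exp (-(c j) * unitBallVol d * u ^ (d + 1) / (d + 1)))
    (t : ℝ) (ht0 : 0 < t) (ht : t < 1/2) :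
    (P {ω | ∑ j ∈ Finset.Icc 1 k, τ j ω ≤ t}).toReal
      ≥ (Real.exp (-(c 1) * t)
            * ∏ j ∈ Finset.Icc 2 k, Real.exp (-(c j) * unitBallVol d * t ^ (d + 1) / (d + 1)))
          * unitBallVol d ^ (k - 1) * (∏ j ∈ Finset.Icc 1 k, c j)
          * (Nat.factorial d : ℝ) ^ (k - 1) * t ^ ((k - 1) * d + k)
          / (Nat.factorial ((k - 1) * d + k)) := by
  obtain ⟨r, rfl⟩ : ∃ r, k = r + 1 := ⟨k - 1, by omega⟩
  have h := main_induction d (r+1) hd c hc P τ hmeas hindep hτ1 hτj t ht0 ht r le_rfl t ht0 le_rfl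
  have he1 : r + 1 - 1 = r := by omega
  rw [he1] at *
  have he2 : r * d + (r + 1) = r * (d+1) + 1 := by ring
  rw [he2] at *
  rw [ge_iff_le, ← ENNReal.ofReal_le_iff_le_toReal (measure_ne_top _ _)]
  exact h

end
end

section
/- Suppose m_0(t) ≤ 1 for all t ≥ 0 and for each 1 ≤ j ≤ k, m_j(t) ≤ ∫_0^t c_j m_{j−1}(u) γ_d (t−u)^d du for all t ≥ 0, with c_j, γ_d > 0 and m_j nonnegative measurable. Then m_k(t) ≤ (d!)^k γ_d^k c_1⋯c_k t^{k(d+1)} / (k(d+1))! for all t ≥ 0. -/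
open MeasureTheory intervalIntegral

lemma beta_nat_aux (t : ℝ) : ∀ (d a : ℕ),
    ∫ x in (0:ℝ)..t, x ^ a * (t - x) ^ d
      = (Nat.factorial a * Nat.factorial d : ℝ) / Nat.factorial (a + d + 1) * t ^ (a + d + 1) := by
  intro d
  induction d with
  | zero =>
    intro a
    simp only [pow_zero, mul_one, integral_pow, Nat.add_zero, Nat.factorial_succ]
    push_cast
    have : ((a : ℝ) + 1) ≠ 0 := by positivity
    field_simp
    ring
  | succ d ih =>
    intro a
    have hderu : ∀ x ∈ Set.uIcc (0:ℝ) t,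
        HasDerivAt (fun x : ℝ => (t - x) ^ (d + 1)) (((d:ℝ) + 1) * (t - x) ^ d * (-1)) x := by
      intro x _
      have h1 : HasDerivAt (fun x : ℝ => t - x) (-1) x := (hasDerivAt_id x).const_sub t
      have := h1.pow (d + 1)
      simpa [Pi.pow_def] using this
    have hderv : ∀ x ∈ Set.uIcc (0:ℝ) t,
        HasDerivAt (fun x : ℝ => x ^ (a + 1) / ((a : ℝ) + 1)) (x ^ a) x := by
      intro x _
      have := (hasDerivAt_pow (a + 1) x).div_const ((a : ℝ) + 1)
      have ha : ((a : ℝ) + 1) ≠ 0 := by positivity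
      simpa [mul_comm, mul_div_assoc, mul_div_cancel_left₀, ha] using this
    have hiu : IntervalIntegrable (fun x : ℝ => ((d:ℝ) + 1) * (t - x) ^ d * (-1))
        volume 0 t := (Continuous.intervalIntegrable (by continuity) _ _)
    have hiv : IntervalIntegrable (fun x : ℝ => x ^ a) volume 0 t :=
      (Continuous.intervalIntegrable (by continuity) _ _)
    have ibp := integral_mul_deriv_eq_deriv_mul hderu hderv hiu hiv
    have h1 : ∫ x in (0:ℝ)..t, x ^ a * (t - x) ^ (d + 1)
        = ∫ x in (0:ℝ)..t, (t - x) ^ (d + 1) * x ^ a := by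
      simp_rw [mul_comm]
    rw [h1, ibp]
    have h2 : ∫ x in (0:ℝ)..t, ((d:ℝ) + 1) * (t - x) ^ d * (-1) * (x ^ (a + 1) / ((a:ℝ) + 1))
        = (-((d:ℝ) + 1) / ((a:ℝ) + 1)) * ∫ x in (0:ℝ)..t, x ^ (a + 1) * (t - x) ^ d := by
      rw [← intervalIntegral.integral_const_mul]
      congr 1; funext x; ring
    rw [h2, ih (a + 1)]
    have he : a + 1 + d + 1 = a + (d + 1) + 1 := by ring
    rw [he]
    simp only [sub_self, zero_pow (Nat.succ_ne_zero d), zero_mul, zero_div, mul_zero,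
      zero_pow (Nat.succ_ne_zero a), sub_zero, zero_sub]
    have ha : ((a : ℝ) + 1) ≠ 0 := by positivity
    have hf : (Nat.factorial (a + (d + 1) + 1) : ℝ) ≠ 0 := by positivity
    rw [Nat.factorial_succ a, Nat.factorial_succ d]
    push_cast
    field_simp

/-- Iterated convolution (Gronwall-type) bound: if `m_0(t) ≤ 1` and
`m_j(t) ≤ ∫_0^t c_j m_{j-1}(u) γ_d (t-u)^d du` for `1 ≤ j ≤ k`, then
`m_k(t) ≤ (d!)^k γ_d^k c_1⋯c_k t^{k(d+1)}/(k(d+1))!`. -/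
theorem iterated_convolution_bound
    (d k : ℕ) (hd : 0 < d)
    (γ : ℝ) (hγ : 0 < γ) (c : ℕ → ℝ) (hc : ∀ j, 0 < c j)
    (m : ℕ → ℝ → ℝ)
    (hmeas : ∀ j, Measurable (m j))
    (hnonneg : ∀ j t, 0 ≤ m j t)
    (h0 : ∀ t : ℝ, 0 ≤ t → m 0 t ≤ 1)
    (hrec : ∀ j : ℕ, 1 ≤ j → j ≤ k → ∀ t : ℝ, 0 ≤ t →
      m j t ≤ ∫ u in (0:ℝ)..t, c j * m (j - 1) u * γ * (t - u) ^ d) :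
    ∀ t : ℝ, 0 ≤ t →
      m k t ≤ (Nat.factorial d : ℝ) ^ k * γ ^ k * (∏ j ∈ Finset.Icc 1 k, c j)
        * t ^ (k * (d + 1)) / (Nat.factorial (k * (d + 1))) := by
  induction k with
  | zero =>
    intro t ht
    simpa using h0 t ht
  | succ k ih =>
    have ih' := ih (fun j h1 h2 => hrec j h1 (h2.trans (Nat.le_succ k)))
    intro t ht
    set N := k * (d + 1) with hN
    set C : ℝ := (Nat.factorial d : ℝ) ^ k * γ ^ k * (∏ j ∈ Finset.Icc 1 k, c j) with hCdef
    have hCpos : 0 < C := by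
      have : (0:ℝ) < ∏ j ∈ Finset.Icc 1 k, c j := Finset.prod_pos fun j _ => hc j
      positivity
    have hstep := hrec (k + 1) (Nat.le_add_left 1 k) le_rfl t ht
    simp only [Nat.add_sub_cancel] at hstep
    set g : ℝ → ℝ := fun u => c (k + 1) * (C * u ^ N / Nat.factorial N) * γ * (t - u) ^ d
      with hgdef
    have hgint : IntervalIntegrable g volume 0 t :=
      Continuous.intervalIntegrable (by fun_prop) _ _
    have hle : ∀ u : ℝ, 0 ≤ u → u ≤ t →
        c (k + 1) * m k u * γ * (t - u) ^ d ≤ g u := by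
      intro u hu0 hut
      have htu : (0:ℝ) ≤ t - u := sub_nonneg.2 hut
      have hm := ih' u hu0
      simp only [hgdef]
      gcongr
      all_goals first
        | exact hm
        | exact hnonneg k u
        | exact le_of_lt (hc (k + 1))
        | positivity
    have hfint : IntervalIntegrable (fun u => c (k + 1) * m k u * γ * (t - u) ^ d)
        volume 0 t := by
      apply hgint.mono_fun
      · exact (((measurable_const.mul (hmeas k)).mul measurable_const).mul
          ((measurable_const.sub measurable_id).pow_const d)).aestronglyMeasurable
      · rw [Set.uIoc_of_le ht]
        refine (ae_restrict_iff' measurableSet_Ioc).2 (Filter.Eventually.of_forall ?_)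
        intro u hu
        have hu0 : (0:ℝ) ≤ u := le_of_lt hu.1
        have htu : (0:ℝ) ≤ t - u := sub_nonneg.2 hu.2
        have hf0 : (0:ℝ) ≤ c (k + 1) * m k u * γ * (t - u) ^ d :=
          mul_nonneg (mul_nonneg (mul_nonneg (hc (k + 1)).le (hnonneg k u)) hγ.le)
            (pow_nonneg htu d)
        have hg0 : (0:ℝ) ≤ g u :=
          mul_nonneg (mul_nonneg (mul_nonneg (hc (k + 1)).le
            (div_nonneg (mul_nonneg hCpos.le (pow_nonneg hu0 N)) (Nat.cast_nonneg _))) hγ.le)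
            (pow_nonneg htu d)
        simp only [Real.norm_eq_abs]
        rw [abs_of_nonneg hf0, abs_of_nonneg hg0]
        exact hle u hu0 hu.2
    have hmono : (∫ u in (0:ℝ)..t, c (k + 1) * m k u * γ * (t - u) ^ d)
        ≤ ∫ u in (0:ℝ)..t, g u := by
      apply intervalIntegral.integral_mono_on ht hfint hgint
      intro u hu
      exact hle u hu.1 hu.2
    have hcomp : (∫ u in (0:ℝ)..t, g u)
        = (c (k + 1) * C * γ / Nat.factorial N) * ∫ u in (0:ℝ)..t, u ^ N * (t - u) ^ d := by
      rw [← intervalIntegral.integral_const_mul]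
      congr 1; funext u; simp only [hgdef]; ring
    rw [hcomp, beta_nat_aux t d N] at hmono
    have hfinal : (c (k + 1) * C * γ / Nat.factorial N) *
          ((Nat.factorial N * Nat.factorial d : ℝ) / Nat.factorial (N + d + 1)
            * t ^ (N + d + 1))
        = (Nat.factorial d : ℝ) ^ (k + 1) * γ ^ (k + 1)
          * (∏ j ∈ Finset.Icc 1 (k + 1), c j)
          * t ^ ((k + 1) * (d + 1)) / (Nat.factorial ((k + 1) * (d + 1))) := by
      have hprod : (∏ j ∈ Finset.Icc 1 (k + 1), c j)
          = (∏ j ∈ Finset.Icc 1 k, c j) * c (k + 1) :=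
        Finset.prod_Icc_succ_top (Nat.le_add_left 1 k) c
      have hidx : (k + 1) * (d + 1) = N + d + 1 := by rw [hN]; ring
      have hN0 : (Nat.factorial N : ℝ) ≠ 0 := by positivity
      have hNd0 : (Nat.factorial (N + d + 1) : ℝ) ≠ 0 := by positivity
      rw [hprod, hidx, hCdef]
      field_simp
      ring
    rw [hfinal] at hmono
    exact hstep.trans hmono
end
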